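/- Let C ≥ 0, p ≥ 0 be real numbers and let F : Γ → ℂ satisfy |F(σ)| ≤ C·λ_σ^p for all σ ∈ Γ. Set Ψ_n = ∑_{k=0}^{n} 𝔈_k(𝔞_k†(𝔞_k F)). Then (i) for every σ ∈ Γ, Ψ_n(σ) → F(σ) − (𝔈 F)(σ) as n → ∞, and (ii) sup_{n ≥ 0} |Ψ_n(σ)| ≤ C·λ_σ^p for all σ ∈ Γ. (By the convergence criterion for generalized functionals, this is the Clark–Ocone decomposition Φ = 𝔈Φ + ∑_{k=0}^{∞} 𝔈_k 𝔞_k† 𝔞_k Φ with strong convergence in S*(Z).) -/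

import Mathlib

open scoped BigOperators

/-- `λ_σ = ∏_{k ∈ σ} (k+1)`, with `λ_∅ = 1`. -/
noncomputable def lam (σ : Finset ℕ) : ℝ := ∏ k ∈ σ, ((k : ℝ) + 1)

/-- The annihilation operator: `(𝔞_k F)(σ) = F(σ ∪ {k})` if `k ∉ σ`, else `0`. -/
def ann (k : ℕ) (F : Finset ℕ → ℂ) : Finset ℕ → ℂ :=
  fun σ => if k ∈ σ then 0 else F (insert k σ)

/-- The creation operator: `(𝔞_k† F)(σ) = F(σ \ {k})` if `k ∈ σ`, else `0`. -/
def cre (k : ℕ) (F : Finset ℕ → ℂ) : Finset ℕ → ℂ :=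
  fun σ => if k ∈ σ then F (σ.erase k) else 0

/-- The conditional expectation operator:
`(𝔈_k F)(σ) = F(σ)` if every `j ∈ σ` satisfies `j ≤ k`, else `0`. -/
def cexp (k : ℕ) (F : Finset ℕ → ℂ) : Finset ℕ → ℂ :=
  fun σ => if ∀ j ∈ σ, j ≤ k then F σ else 0

/-- The expectation operator: `(𝔈 F)(σ) = F(∅)` if `σ = ∅`, else `0`. -/
def expec (F : Finset ℕ → ℂ) : Finset ℕ → ℂ :=
  fun σ => if σ = ∅ then F ∅ else 0


lemma term_eq (F : Finset ℕ → ℂ) (k : ℕ) (σ : Finset ℕ) :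
    cexp k (cre k (ann k F)) σ = if k ∈ σ ∧ ∀ j ∈ σ, j ≤ k then F σ else 0 := by
  unfold cexp cre ann
  by_cases h1 : ∀ j ∈ σ, j ≤ k
  · by_cases h2 : k ∈ σ
    · simp [h1, h2, Finset.insert_erase h2]
    · simp [h1, h2]
  · simp [h1]

lemma sum_eq (F : Finset ℕ → ℂ) (σ : Finset ℕ) (h : σ.Nonempty) (n : ℕ) :
    ∑ k ∈ Finset.range (n + 1), cexp k (cre k (ann k F)) σ
      = if σ.max' h ≤ n then F σ else 0 := by
  have hcond : ∀ k, (k ∈ σ ∧ ∀ j ∈ σ, j ≤ k) ↔ k = σ.max' h := by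
    intro k
    constructor
    · rintro ⟨hk, hle⟩
      exact le_antisymm (Finset.le_max' σ k hk) (hle _ (σ.max'_mem h))
    · rintro rfl
      exact ⟨σ.max'_mem h, fun j hj => Finset.le_max' σ j hj⟩
  calc ∑ k ∈ Finset.range (n + 1), cexp k (cre k (ann k F)) σ
      = ∑ k ∈ Finset.range (n + 1), if k = σ.max' h then F σ else 0 := by
        refine Finset.sum_congr rfl fun k _ => ?_
        rw [term_eq, if_congr (hcond k) rfl rfl]
    _ = if σ.max' h ∈ Finset.range (n + 1) then F σ else 0 :=
        Finset.sum_ite_eq' _ _ _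
    _ = if σ.max' h ≤ n then F σ else 0 := by
        simp [Finset.mem_range, Nat.lt_succ_iff]

/-- If `|F(σ)| ≤ C λ_σ^p`, then the Clark–Ocone partial sums
`Ψ_n = ∑_{k=0}^n 𝔈_k 𝔞_k† 𝔞_k F` converge pointwise to `F − 𝔈F` and are
uniformly bounded by `C λ_σ^p`. -/
theorem stmt10 (C p : ℝ) (hC : 0 ≤ C) (hp : 0 ≤ p) (F : Finset ℕ → ℂ)
    (hF : ∀ σ : Finset ℕ, ‖F σ‖ ≤ C * lam σ ^ p) :
    (∀ σ : Finset ℕ,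
      Filter.Tendsto
        (fun n : ℕ => ∑ k ∈ Finset.range (n + 1), cexp k (cre k (ann k F)) σ)
        Filter.atTop (nhds (F σ - expec F σ))) ∧
    (∀ σ : Finset ℕ, ∀ n : ℕ,
      ‖∑ k ∈ Finset.range (n + 1), cexp k (cre k (ann k F)) σ‖
        ≤ C * lam σ ^ p) := by
  have hbnd : ∀ σ : Finset ℕ, (0:ℝ) ≤ C * lam σ ^ p := by
    intro σ
    apply mul_nonneg hC
    apply Real.rpow_nonneg
    exact Finset.prod_nonneg fun k _ => by positivity
  constructor
  · intro σ
    rcases eq_or_ne σ ∅ with rfl | hne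
    · have : ∀ n : ℕ, ∑ k ∈ Finset.range (n + 1), cexp k (cre k (ann k F)) (∅ : Finset ℕ) = 0 := by
        intro n
        refine Finset.sum_eq_zero fun k _ => ?_
        simp [term_eq]
      rw [show F ∅ - expec F ∅ = 0 by simp [expec]]
      simp only [this]
      exact tendsto_const_nhds
    · have h : σ.Nonempty := Finset.nonempty_iff_ne_empty.mpr hne
      have : F σ - expec F σ = F σ := by simp [expec, hne]
      rw [this]
      have heq : (fun n : ℕ => ∑ k ∈ Finset.range (n + 1), cexp k (cre k (ann k F)) σ)
          =ᶠ[Filter.atTop] fun _ => F σ := by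
        filter_upwards [Filter.eventually_ge_atTop (σ.max' h)] with n hn
        rw [sum_eq F σ h n, if_pos hn]
      exact Filter.Tendsto.congr' heq.symm tendsto_const_nhds
  · intro σ n
    rcases eq_or_ne σ ∅ with rfl | hne
    · have : ∑ k ∈ Finset.range (n + 1), cexp k (cre k (ann k F)) (∅ : Finset ℕ) = 0 := by
        refine Finset.sum_eq_zero fun k _ => ?_
        simp [term_eq]
      rw [this]
      simpa using hbnd ∅
    · have h : σ.Nonempty := Finset.nonempty_iff_ne_empty.mpr hne
      rw [sum_eq F σ h n]
      split
      · exact hF σ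
      · simpa using hbnd σ
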